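/- Let Γ be the subgroup of G generated by (e₁,0), (e₂,0), (e₃,0), where e₁, e₂, e₃ is the standard basis of ℝ³. Then the projection π(x,x*) = x maps Γ onto ℤ³, and Γ ∩ ({0} × ℝ³) = {0} × ℤ³; thus Γ is a central extension 0 → ℤ³ → Γ → ℤ³ → 0. -/

import Mathlib

/-- The product `(x,x*)·(y,y*) = (x+y, x* + y* + ½ x×y)` on `G = ℝ³ × ℝ³`. -/
noncomputable def heisMul (a b : (Fin 3 → ℝ) × (Fin 3 → ℝ)) :
    (Fin 3 → ℝ) × (Fin 3 → ℝ) :=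
  (a.1 + b.1, a.2 + b.2 + (1/2 : ℝ) • crossProduct a.1 b.1)

/-- Membership in the subgroup of `G` generated by a set `S` (with respect to `heisMul`). -/
inductive heisGen (S : Set ((Fin 3 → ℝ) × (Fin 3 → ℝ))) :
    (Fin 3 → ℝ) × (Fin 3 → ℝ) → Prop
  | base {a} : a ∈ S → heisGen S a
  | one : heisGen S 0
  | mul {a b} : heisGen S a → heisGen S b → heisGen S (heisMul a b)
  | inv {a} : heisGen S a → heisGen S (-a.1, -a.2)

/-- The generators `(e₁,0), (e₂,0), (e₃,0)` of `Γ`. -/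
noncomputable def heisGenerators : Set ((Fin 3 → ℝ) × (Fin 3 → ℝ)) :=
  {a | ∃ i : Fin 3, a = (Pi.single i 1, 0)}

lemma crossApply3 (u v : Fin 3 → ℝ) (i : Fin 3) :
    crossProduct u v i = u (i+1) * v (i+2) - u (i+2) * v (i+1) := by
  fin_cases i <;> simp [crossProduct]

/-- The key invariant: every element of `Γ` has integer first component `m`, half-integer
second component `n/2`, and `n ≡ m₂m₃ , m₃m₁ , m₁m₂ (mod 2)` componentwise. -/
lemma heis_invariant {a} (h : heisGen heisGenerators a) :
    ∃ m n : Fin 3 → ℤ, (∀ i, a.1 i = m i) ∧ (∀ i, 2 * a.2 i = n i) ∧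
      (∀ i, (n i : ZMod 2) = (m (i+1) : ZMod 2) * (m (i+2) : ZMod 2)) := by
  induction h with
  | @base a h =>
      obtain ⟨j, rfl⟩ := h
      refine ⟨fun i => if i = j then 1 else 0, 0, ?_, ?_, ?_⟩
      · intro i; by_cases hij : i = j <;> simp [Pi.single_apply, hij]
      · intro i; simp
      · intro i
        have hne : (i : Fin 3) + 1 ≠ i + 2 := by revert i; decide
        by_cases h1 : i + 1 = j <;> by_cases h2 : i + 2 = j
        · exact absurd (h1.trans h2.symm) hne
        · simp [h1, h2]
        · simp [h1, h2]
        · simp [h1, h2]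
  | one => exact ⟨0, 0, by simp, by simp, by simp⟩
  | @mul a b ha hb iha ihb =>
      obtain ⟨ma, na, ha1, ha2, ha3⟩ := iha
      obtain ⟨mb, nb, hb1, hb2, hb3⟩ := ihb
      refine ⟨ma + mb,
        fun i => na i + nb i + (ma (i+1) * mb (i+2) - ma (i+2) * mb (i+1)), ?_, ?_, ?_⟩
      · intro i; simp [heisMul, ha1 i, hb1 i]
      · intro i
        have e2 : (heisMul a b).2 i
            = a.2 i + b.2 i + (1/2 : ℝ) * (a.1 (i+1) * b.1 (i+2) - a.1 (i+2) * b.1 (i+1)) := by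
          simp only [heisMul, Pi.add_apply, Pi.smul_apply, smul_eq_mul, crossApply3]
        rw [e2, ha1, ha1, hb1, hb1]
        push_cast
        linear_combination ha2 i + hb2 i
      · intro i
        have h2 : (2 : ZMod 2) = 0 := rfl
        simp only [Pi.add_apply]
        push_cast
        linear_combination ha3 i + hb3 i - (ma (i+2) * mb (i+1)) * h2
  | @inv a ha iha =>
      obtain ⟨ma, na, ha1, ha2, ha3⟩ := iha
      refine ⟨-ma, -na, ?_, ?_, ?_⟩
      · intro i; simp only [Pi.neg_apply]; push_cast; rw [ha1 i]
      · intro i; simp only [Pi.neg_apply]; push_cast; linear_combination -ha2 i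
      · intro i
        have h2 : (2 : ZMod 2) = 0 := rfl
        simp only [Pi.neg_apply]
        push_cast
        linear_combination -ha3 i - (ma (i+1) * ma (i+2)) * h2

lemma heis_gen_e (i : Fin 3) : heisGen heisGenerators (Pi.single i 1, 0) :=
  heisGen.base ⟨i, rfl⟩

lemma heis_gen_e_neg (i : Fin 3) : heisGen heisGenerators (-(Pi.single i 1), 0) := by
  simpa using heisGen.inv (heis_gen_e i)

lemma heis_pow_e (i : Fin 3) (k : ℤ) :
    heisGen heisGenerators ((k : ℝ) • (Pi.single i 1 : Fin 3 → ℝ), 0) := by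
  induction k using Int.induction_on with
  | zero => simpa [Prod.mk_zero_zero] using heisGen.one (S := heisGenerators)
  | succ k ih =>
      have h := heisGen.mul ih (heis_gen_e i)
      have e : heisMul (((k : ℤ) : ℝ) • (Pi.single i 1 : Fin 3 → ℝ), 0)
            ((Pi.single i 1 : Fin 3 → ℝ), 0)
          = ((((k : ℤ) : ℝ) + 1) • (Pi.single i 1 : Fin 3 → ℝ), 0) := by
        simp [heisMul, map_smul, cross_self, add_smul, one_smul]
      rw [e] at h
      convert h using 3 <;> push_cast <;> ring
  | pred k ih =>
      have h := heisGen.mul ih (heis_gen_e_neg i)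
      have e : heisMul (((-k : ℤ) : ℝ) • (Pi.single i 1 : Fin 3 → ℝ), 0)
            (-(Pi.single i 1 : Fin 3 → ℝ), 0)
          = ((((-k : ℤ) : ℝ) - 1) • (Pi.single i 1 : Fin 3 → ℝ), 0) := by
        simp [heisMul, map_smul, map_neg, cross_self, sub_smul, sub_eq_add_neg, add_smul,
          neg_smul, one_smul]
      rw [e] at h
      convert h using 3 <;> push_cast <;> ring

lemma heis_center_e (i : Fin 3) : heisGen heisGenerators (0, Pi.single i 1) := by
  have key : ∀ j k : Fin 3,
      heisGen heisGenerators
        (heisMul (heisMul (heisMul ((Pi.single j 1 : Fin 3 → ℝ), 0) (Pi.single k 1, 0))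
          (-(Pi.single j 1), 0)) (-(Pi.single k 1), 0)) :=
    fun j k => heisGen.mul (heisGen.mul (heisGen.mul (heis_gen_e j) (heis_gen_e k))
      (heis_gen_e_neg j)) (heis_gen_e_neg k)
  fin_cases i
  · have h := key 1 2
    have e : heisMul (heisMul (heisMul ((Pi.single 1 1 : Fin 3 → ℝ), 0) (Pi.single 2 1, 0))
        (-(Pi.single 1 1), 0)) (-(Pi.single 2 1), 0) = (0, (Pi.single 0 1 : Fin 3 → ℝ)) := by
      refine Prod.ext ?_ ?_ <;> funext j <;> fin_cases j <;>
        simp [heisMul, crossProduct, Pi.single_apply] <;> norm_num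
    rw [e] at h; exact h
  · have h := key 2 0
    have e : heisMul (heisMul (heisMul ((Pi.single 2 1 : Fin 3 → ℝ), 0) (Pi.single 0 1, 0))
        (-(Pi.single 2 1), 0)) (-(Pi.single 0 1), 0) = (0, (Pi.single 1 1 : Fin 3 → ℝ)) := by
      refine Prod.ext ?_ ?_ <;> funext j <;> fin_cases j <;>
        simp [heisMul, crossProduct, Pi.single_apply] <;> norm_num
    rw [e] at h; exact h
  · have h := key 0 1
    have e : heisMul (heisMul (heisMul ((Pi.single 0 1 : Fin 3 → ℝ), 0) (Pi.single 1 1, 0))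
        (-(Pi.single 0 1), 0)) (-(Pi.single 1 1), 0) = (0, (Pi.single 2 1 : Fin 3 → ℝ)) := by
      refine Prod.ext ?_ ?_ <;> funext j <;> fin_cases j <;>
        simp [heisMul, crossProduct, Pi.single_apply] <;> norm_num
    rw [e] at h; exact h

lemma heis_center_pow (i : Fin 3) (k : ℤ) :
    heisGen heisGenerators (0, (k : ℝ) • (Pi.single i 1 : Fin 3 → ℝ)) := by
  induction k using Int.induction_on with
  | zero => simpa [Prod.mk_zero_zero] using heisGen.one (S := heisGenerators)
  | succ k ih =>
      have h := heisGen.mul ih (heis_center_e i)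
      have e : heisMul (0, ((k : ℤ) : ℝ) • (Pi.single i 1 : Fin 3 → ℝ))
            (0, (Pi.single i 1 : Fin 3 → ℝ))
          = (0, (((k : ℤ) : ℝ) + 1) • (Pi.single i 1 : Fin 3 → ℝ)) := by
        simp [heisMul, add_smul, one_smul]
      rw [e] at h
      convert h using 3 <;> push_cast <;> ring
  | pred k ih =>
      have hneg : heisGen heisGenerators (0, -(Pi.single i 1 : Fin 3 → ℝ)) := by
        simpa using heisGen.inv (heis_center_e i)
      have h := heisGen.mul ih hneg
      have e : heisMul (0, ((-k : ℤ) : ℝ) • (Pi.single i 1 : Fin 3 → ℝ))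
            (0, -(Pi.single i 1 : Fin 3 → ℝ))
          = (0, (((-k : ℤ) : ℝ) - 1) • (Pi.single i 1 : Fin 3 → ℝ)) := by
        simp [heisMul, sub_smul, sub_eq_add_neg, add_smul, neg_smul, one_smul]
      rw [e] at h
      convert h using 3 <;> push_cast <;> ring

lemma heis_center (v : Fin 3 → ℤ) :
    heisGen heisGenerators (0, fun i => (v i : ℝ)) := by
  have h := heisGen.mul (heisGen.mul (heis_center_pow 0 (v 0)) (heis_center_pow 1 (v 1)))
    (heis_center_pow 2 (v 2))
  have e : heisMul (heisMul (0, ((v 0 : ℝ)) • (Pi.single 0 1 : Fin 3 → ℝ))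
        (0, ((v 1 : ℝ)) • (Pi.single 1 1 : Fin 3 → ℝ)))
        (0, ((v 2 : ℝ)) • (Pi.single 2 1 : Fin 3 → ℝ))
      = (0, fun i => (v i : ℝ)) := by
    refine Prod.ext ?_ ?_ <;> funext j <;> fin_cases j <;>
      simp [heisMul, crossProduct, Pi.single_apply] <;> norm_num
  rw [e] at h; exact h

lemma heis_first (u : Fin 3 → ℤ) :
    ∃ w, heisGen heisGenerators ((fun i => (u i : ℝ)), w) := by
  have h := heisGen.mul (heisGen.mul (heis_pow_e 0 (u 0)) (heis_pow_e 1 (u 1)))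
    (heis_pow_e 2 (u 2))
  set p := heisMul (heisMul (((u 0 : ℝ)) • (Pi.single 0 1 : Fin 3 → ℝ), 0)
    (((u 1 : ℝ)) • (Pi.single 1 1 : Fin 3 → ℝ), 0))
    (((u 2 : ℝ)) • (Pi.single 2 1 : Fin 3 → ℝ), 0) with hp
  have e1 : p.1 = fun i => (u i : ℝ) := by
    funext j
    fin_cases j <;> simp [hp, heisMul, Pi.single_apply]
  refine ⟨p.2, ?_⟩
  rw [← e1]
  exact h

/-- For the subgroup `Γ ⊆ G` generated by `(e₁,0), (e₂,0), (e₃,0)`: the projection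
`π(x,x*) = x` maps `Γ` onto `ℤ³`, and `Γ ∩ ({0} × ℝ³) = {0} × ℤ³`; thus `Γ` is a central
extension `0 → ℤ³ → Γ → ℤ³ → 0`. -/
theorem heisGamma_central_extension :
    (Prod.fst '' {a | heisGen heisGenerators a}
        = {u : Fin 3 → ℝ | ∀ i, ∃ k : ℤ, u i = (k : ℝ)}) ∧
    ({a | heisGen heisGenerators a} ∩ {a : (Fin 3 → ℝ) × (Fin 3 → ℝ) | a.1 = 0}
        = {a : (Fin 3 → ℝ) × (Fin 3 → ℝ) | a.1 = 0 ∧ ∀ i, ∃ k : ℤ, a.2 i = (k : ℝ)}) := by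
  constructor
  · ext u
    constructor
    · rintro ⟨a, ha, rfl⟩
      obtain ⟨m, n, h1, _, _⟩ := heis_invariant ha
      exact fun i => ⟨m i, h1 i⟩
    · intro hu
      choose k hk using hu
      obtain ⟨w, hw⟩ := heis_first k
      have hu' : u = fun i => (k i : ℝ) := funext hk
      exact ⟨((fun i => (k i : ℝ)), w), hw, hu'.symm⟩
  · ext a
    constructor
    · rintro ⟨ha, h0⟩
      refine ⟨h0, ?_⟩
      obtain ⟨m, n, h1, h2, h3⟩ := heis_invariant ha
      intro i
      have hm : ∀ j, m j = 0 := by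
        intro j
        have h1j := h1 j
        rw [h0] at h1j
        have hmj : ((m j : ℝ)) = 0 := by simpa using h1j.symm
        exact_mod_cast hmj
      have hn0 : ((n i : ZMod 2)) = 0 := by
        rw [h3 i, hm, hm]; simp
      obtain ⟨c, hc⟩ := (ZMod.intCast_zmod_eq_zero_iff_dvd _ 2).1 hn0
      refine ⟨c, ?_⟩
      have h2i := h2 i
      rw [hc] at h2i
      push_cast at h2i
      linarith
    · rintro ⟨h0, hv⟩
      choose k hk using hv
      have ha : a = (0, fun i => (k i : ℝ)) := Prod.ext h0 (funext hk)
      exact ⟨by rw [ha]; exact heis_center k, h0⟩
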